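/- Let φ : ℂ → ℂ be an entire function with ∫_ℂ |φ(w)|² e^{−|w|²} dA(w) < ∞. Then for every z ∈ ℂ the reproducing formula holds: φ(z) = (1/π) ∫_ℂ φ(w) · e^{z·conj(w)} · e^{−|w|²} dA(w). (The Bargmann space is a reproducing kernel Hilbert space with kernel K(z,w) = e^{z·conj(w)}.) -/

import Mathlib

open MeasureTheory Set Real

open scoped Real

noncomputable section

/-- Circle mean value property for entire functions. -/
lemma circle_mvp (h : ℂ → ℂ) (hd : Differentiable ℂ h) {R : ℝ} (hR : 0 < R) :
    ∫ θ in (0:ℝ)..(2 * π), h (circleMap 0 R θ) = (2 * π : ℝ) • h 0 := by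
  have key : (∮ z in C(0, R), (z - 0)⁻¹ • h z) = (2 * ↑π * Complex.I) • h 0 :=
    (hd.differentiableOn).circleIntegral_sub_inv_smul (Metric.mem_ball_self hR)
  have lhs : (∮ z in C(0, R), (z - 0)⁻¹ • h z)
      = Complex.I * ∫ θ in (0:ℝ)..(2 * π), h (circleMap 0 R θ) := by
    rw [circleIntegral, ← intervalIntegral.integral_const_mul]
    congr 1
    funext θ
    have hne : circleMap 0 R θ ≠ 0 := circleMap_ne_center hR.ne'
    simp only [deriv_circleMap, smul_eq_mul, sub_zero]
    field_simp
  rw [lhs] at key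
  have step : Complex.I * ∫ θ in (0:ℝ)..(2 * π), h (circleMap 0 R θ)
      = Complex.I * ((2 * π : ℝ) • h 0) := by
    rw [key]
    simp only [smul_eq_mul, Complex.real_smul]
    push_cast
    ring
  exact mul_left_cancel₀ Complex.I_ne_zero step

/-- Integrability transfer to polar coordinates. -/
lemma integrableOn_polar {f : ℂ → ℂ} (hf : Integrable f) :
    IntegrableOn (fun p : ℝ × ℝ => p.1 • f (Complex.polarCoord.symm p)) polarCoord.target := by
  have hg : Integrable (fun p : ℝ × ℝ => f (Complex.measurableEquivRealProd.symm p)) :=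
    ((Complex.volume_preserving_equiv_real_prod.symm).integrable_comp_emb
      Complex.measurableEquivRealProd.symm.measurableEmbedding).mpr hf
  set B : ℝ × ℝ → ℝ × ℝ →L[ℝ] ℝ × ℝ := fun p =>
    LinearMap.toContinuousLinearMap (Matrix.toLin (Module.Basis.finTwoProd ℝ) (Module.Basis.finTwoProd ℝ)
      !![Real.cos p.2, -p.1 * Real.sin p.2; Real.sin p.2, p.1 * Real.cos p.2]) with hB
  have A : ∀ p ∈ polarCoord.target, HasFDerivWithinAt polarCoord.symm (B p) polarCoord.target p :=
    fun p _ => (hasFDerivAt_polarCoord_symm p).hasFDerivWithinAt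
  have B_det : ∀ p, (B p).det = p.1 := by
    intro p
    conv_rhs => rw [← one_mul p.1, ← cos_sq_add_sin_sq p.2]
    simp only [hB, neg_mul, LinearMap.det_toContinuousLinearMap, LinearMap.det_toLin,
      Matrix.det_fin_two_of, sub_neg_eq_add]
    ring
  have inj : InjOn polarCoord.symm polarCoord.target := by
    have := polarCoord.symm.injOn
    rwa [OpenPartialHomeomorph.symm_source] at this
  have h1 : IntegrableOn (fun p : ℝ × ℝ => f (Complex.measurableEquivRealProd.symm p))
      (polarCoord.symm '' polarCoord.target) := by
    rw [polarCoord.symm_image_target_eq_source]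
    exact hg.integrableOn
  have h2 := (integrableOn_image_iff_integrableOn_abs_det_fderiv_smul volume
    polarCoord.open_target.measurableSet A inj _).mp h1
  refine h2.congr_fun (fun p hp => ?_) polarCoord.open_target.measurableSet
  dsimp only
  rw [B_det, abs_of_pos (hp.1 : (0:ℝ) < p.1)]
  rfl

/-- Gaussian mean value property for entire functions. -/
lemma gaussian_mvp (h : ℂ → ℂ) (hd : Differentiable ℂ h)
    (hi : Integrable fun u : ℂ => h u * ((Real.exp (-‖u‖ ^ 2) : ℝ) : ℂ)) :
    ∫ u : ℂ, h u * ((Real.exp (-‖u‖ ^ 2) : ℝ) : ℂ) = (π : ℂ) * h 0 := by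
  have hInt := integrableOn_polar hi
  rw [← Complex.integral_comp_polarCoord_symm]
  have htarget : polarCoord.target = Set.Ioi (0:ℝ) ×ˢ Set.Ioo (-π) π := rfl
  rw [htarget] at hInt ⊢
  rw [Measure.volume_eq_prod] at hInt ⊢
  rw [MeasureTheory.setIntegral_prod _ hInt]
  have step : ∀ r ∈ Set.Ioi (0:ℝ),
      (∫ θ in Set.Ioo (-π) π,
        (r, θ).1 • ((fun u : ℂ => h u * ((Real.exp (-‖u‖ ^ 2) : ℝ) : ℂ))
          (Complex.polarCoord.symm (r, θ))))
      = ((2 * π : ℝ) : ℂ) * h 0 * ((r:ℂ) * Complex.exp (-1 * (r:ℂ)^2)) := by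
    intro r hr
    have hr0 : (0:ℝ) < r := hr
    have e2 : ∀ θ : ℝ, ‖Complex.polarCoord.symm (r, θ)‖ = r := fun θ => by
      rw [Complex.norm_polarCoord_symm, abs_of_pos hr0]
    have e1 : ∀ θ : ℝ, Complex.polarCoord.symm (r, θ) = circleMap 0 r θ := fun θ => by
      simp [circleMap, Complex.exp_mul_I, ← Complex.ofReal_cos, ← Complex.ofReal_sin]
    simp only [e2]
    simp only [e1]
    rw [MeasureTheory.integral_smul, MeasureTheory.integral_mul_const]
    have hcircle : (∫ θ in Set.Ioo (-π) π, h (circleMap 0 r θ)) = (2 * π : ℝ) • h 0 := by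
      rw [← MeasureTheory.integral_Ioc_eq_integral_Ioo,
        ← intervalIntegral.integral_of_le (by linarith [Real.pi_pos] : (-π) ≤ π)]
      have hper : Function.Periodic (fun θ => h (circleMap 0 r θ)) (2 * π) :=
        (periodic_circleMap 0 r).comp h
      have hshift : ∫ θ in (-π)..π, h (circleMap 0 r θ)
          = ∫ θ in (0:ℝ)..(2*π), h (circleMap 0 r θ) := by
        have := hper.intervalIntegral_add_eq (-π) 0
        simpa [show -π + 2*π = π by ring] using this
      rw [hshift]
      exact circle_mvp h hd hr0
    rw [hcircle]
    push_cast [Complex.real_smul, Complex.ofReal_exp]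
    ring_nf
  rw [MeasureTheory.setIntegral_congr_fun measurableSet_Ioi step,
    MeasureTheory.integral_const_mul,
    integral_mul_cexp_neg_mul_sq (by norm_num : (0:ℝ) < (1:ℂ).re)]
  push_cast
  ring

theorem bargmann_reproducing (φ : ℂ → ℂ)
    (hφ : Differentiable ℂ φ)
    (hL2 : (∫⁻ w : ℂ, ENNReal.ofReal (‖φ w‖ ^ 2 * Real.exp (-‖w‖ ^ 2))) < ⊤) :
    ∀ z : ℂ,
      φ z = ((1 / Real.pi : ℝ) : ℂ) *
        ∫ w : ℂ, φ w * Complex.exp (z * (starRingEnd ℂ) w) *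
          (Real.exp (-‖w‖ ^ 2) : ℝ) := by
  intro z
  set G : ℂ → ℂ := fun w => φ w * Complex.exp (z * (starRingEnd ℂ) w) *
    ((Real.exp (-‖w‖ ^ 2) : ℝ) : ℂ) with hG
  -- Integrability of G
  have hint1 : Integrable (fun w : ℂ => ‖φ w‖ ^ 2 * Real.exp (-‖w‖ ^ 2)) := by
    refine ⟨((hφ.continuous.norm.pow 2).mul
      (Real.continuous_exp.comp (continuous_norm.pow 2).neg)).aestronglyMeasurable, ?_⟩
    rw [hasFiniteIntegral_iff_ofReal (by filter_upwards with w; positivity)]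
    exact hL2
  have hgauss : Integrable (fun w : ℂ => Real.exp (-‖w - z‖ ^ 2)) := by
    have base : Integrable (fun v : ℂ => Real.exp (-‖v‖ ^ 2)) := by
      have h0 := (GaussianFourier.integrable_cexp_neg_mul_sq_norm_add (V := ℂ)
        (by norm_num : (0:ℝ) < (1:ℂ).re) 0 0).norm
      refine h0.congr (Filter.Eventually.of_forall fun v => ?_)
      simp only [Complex.norm_exp]
      congr 1
      simp [← Complex.ofReal_pow]
    simpa using base.comp_sub_right z
  have hbound : ∀ w : ℂ, ‖G w‖ ≤ (‖φ w‖^2 * Real.exp (-‖w‖^2))/2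
      + (Real.exp (‖z‖^2) * Real.exp (-‖w - z‖^2))/2 := by
    intro w
    have h1 : ‖G w‖ = ‖φ w‖ * Real.exp ((z * (starRingEnd ℂ) w).re) * Real.exp (-‖w‖^2) := by
      rw [hG]
      simp only [norm_mul]
      rw [Complex.norm_exp,
        Complex.norm_real, Real.norm_eq_abs,
        abs_of_pos (Real.exp_pos _)]
    have hid : ‖z‖^2 - ‖w - z‖^2 = 2 * (z * (starRingEnd ℂ) w).re - ‖w‖^2 := by
      simp only [Complex.sq_norm, Complex.normSq_apply, Complex.mul_re,
        Complex.conj_re, Complex.conj_im, Complex.sub_re, Complex.sub_im]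
      ring
    set A := ‖φ w‖ with hA
    set t := (z * (starRingEnd ℂ) w).re
    set n := ‖w‖^2 with hn
    have e2 : Real.exp (-n) = Real.exp (-n/2)^2 := by
      rw [sq, ← Real.exp_add]
      congr 1
      ring
    have e : Real.exp (‖z‖^2) * Real.exp (-‖w - z‖^2) = Real.exp (t - n/2)^2 := by
      have h2 : Real.exp (t - n/2)^2 = Real.exp (2*t - n) := by
        rw [sq, ← Real.exp_add]
        congr 1
        ring
      have harg : ‖z‖^2 + -‖w - z‖^2 = 2*t - n := by linarith [hid]
      rw [h2, ← Real.exp_add, harg]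
    have e3 : ‖G w‖ = (A * Real.exp (-n/2)) * Real.exp (t - n/2) := by
      have harg : t + -n = -n/2 + (t - n/2) := by ring
      rw [h1, mul_assoc, ← Real.exp_add, mul_assoc, ← Real.exp_add, harg]
    rw [e3, e, e2]
    have hA0 : 0 ≤ A := norm_nonneg _
    nlinarith [sq_nonneg (A * Real.exp (-n/2) - Real.exp (t - n/2)),
      sq_nonneg (A * Real.exp (-n/2)), Real.exp_pos (t - n/2), Real.exp_pos (-n/2)]
  have hGmeas : AEStronglyMeasurable G volume := by
    apply Continuous.aestronglyMeasurable
    exact (hφ.continuous.mul (Complex.continuous_exp.comp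
      (continuous_const.mul (Complex.continuous_conj)))).mul
      (Complex.continuous_ofReal.comp (Real.continuous_exp.comp (continuous_norm.pow 2).neg))
  have hG_int : Integrable G := by
    refine Integrable.mono' ((hint1.div_const 2).add
      ((hgauss.const_mul (Real.exp (‖z‖^2))).div_const 2)) hGmeas ?_
    filter_upwards with w
    exact hbound w
  -- translation + Gaussian mean value
  have hptw : ∀ u : ℂ, G (z + u)
      = (φ (z + u) * Complex.exp (-((starRingEnd ℂ) z) * u)) * ((Real.exp (-‖u‖^2) : ℝ) : ℂ) := by
    intro u
    have hnorm : ∀ x : ℂ, ((‖x‖^2 : ℝ) : ℂ) = x * (starRingEnd ℂ) x := fun x => by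
      rw [Complex.ofReal_pow]
      exact (Complex.mul_conj' x).symm
    simp only [hG]
    rw [Complex.ofReal_exp, Complex.ofReal_exp, Complex.ofReal_neg, Complex.ofReal_neg,
      hnorm, hnorm, mul_assoc, mul_assoc, ← Complex.exp_add, ← Complex.exp_add]
    congr 2
    simp only [map_add]
    ring
  have key : (∫ w : ℂ, G w) = (π : ℂ) * φ z := by
    rw [← MeasureTheory.integral_add_left_eq_self G z]
    have hrw : (∫ u : ℂ, G (z + u))
        = ∫ u : ℂ, (fun u : ℂ => φ (z + u) * Complex.exp (-((starRingEnd ℂ) z) * u)) u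
            * ((Real.exp (-‖u‖^2) : ℝ) : ℂ) := by
      congr 1
      funext u
      exact hptw u
    rw [hrw, gaussian_mvp _ ?_ ?_]
    · simp
    · exact (hφ.comp ((differentiable_const z).add differentiable_id)).mul
        (Complex.differentiable_exp.comp (differentiable_id.const_mul _))
    · exact (hG_int.comp_add_left z).congr (by filter_upwards with u; exact hptw u)
  rw [key]
  have hπ : (π : ℂ) ≠ 0 := by exact_mod_cast Real.pi_ne_zero
  push_cast
  field_simp
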